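/- arXiv:2108.05831 — 3 statements merged into one kernel-verified Lean document; each statement's English description precedes it below -/
import Mathlib

section
/- For every γ in the Gårding cone Γ_k = {λ ∈ ℝⁿ : σⱼ(λ) > 0 for all j = 1,…,k} and every index i ∈ {1,…,n}, one has σ_{k−1,i}(γ) > 0, where σ_{k−1,i}(γ) = σ_{k−1}(γ with the i-th coordinate replaced by 0). -/
set_option linter.unusedSectionVars false
set_option linter.unusedVariables false

open Finset

variable {ι : Type*} [DecidableEq ι]

def E (A : Finset ι) (j : ℕ) (x : ι → ℝ) : ℝ :=
  ∑ s ∈ A.powersetCard j, ∏ a ∈ s, x a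

lemma E_zero (A : Finset ι) (x : ι → ℝ) : E A 0 x = 1 := by
  simp [E]

lemma E_eq_zero (A : Finset ι) {j : ℕ} (h : A.card < j) (x : ι → ℝ) : E A j x = 0 := by
  simp [E, powersetCard_eq_empty.2 h]

lemma E_congr {A : Finset ι} {x y : ι → ℝ} (j : ℕ) (h : ∀ a ∈ A, x a = y a) :
    E A j x = E A j y :=
  Finset.sum_congr rfl fun s hs => Finset.prod_congr rfl fun a ha =>
    h a ((mem_powersetCard.1 hs).1 ha)

lemma E_erase (A : Finset ι) {i : ι} (hi : i ∈ A) (j : ℕ) (x : ι → ℝ) :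
    E A (j+1) x = E (A.erase i) (j+1) x + x i * E (A.erase i) j x := by
  have h1 : i ∉ A.erase i := notMem_erase _ _
  have h2 : insert i (A.erase i) = A := insert_erase hi
  have hu := powersetCard_succ_insert h1 j
  rw [h2] at hu
  rw [E, hu, sum_union, E, E, mul_sum]
  · congr 1
    rw [sum_image]
    · refine sum_congr rfl fun s hs => ?_
      have hins : i ∉ s := fun h => h1 ((mem_powersetCard.1 hs).1 h)
      rw [prod_insert hins]
    · intro s hs t ht hst
      have hs' : i ∉ s := fun h => h1 ((mem_powersetCard.1 hs).1 h)
      have ht' : i ∉ t := fun h => h1 ((mem_powersetCard.1 ht).1 h)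
      rw [← erase_insert hs', ← erase_insert ht', hst]
  · rw [disjoint_left]
    intro s hs hs'
    have h3 : i ∉ s := fun h => h1 ((mem_powersetCard.1 hs).1 h)
    obtain ⟨t, _, rfl⟩ := mem_image.1 hs'
    exact h3 (mem_insert_self _ _)

lemma count_supersets {A u : Finset ι} (hu : u ⊆ A) {j : ℕ} (hm : u.card ≤ j) :
    ((A.powersetCard j).filter (fun s => u ⊆ s)).card = (A.card - u.card).choose (j - u.card) := by
  rw [← card_sdiff_of_subset hu, ← card_powersetCard]
  apply card_bij' (fun s _ => s \ u) (fun v _ => v ∪ u)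
  · intro s hs
    obtain ⟨hs1, hs2⟩ := mem_filter.1 hs
    obtain ⟨hsA, hscard⟩ := mem_powersetCard.1 hs1
    exact mem_powersetCard.2 ⟨sdiff_subset_sdiff hsA (le_refl u), by rw [card_sdiff_of_subset hs2, hscard]⟩
  · intro v hv
    obtain ⟨hvA, hvcard⟩ := mem_powersetCard.1 hv
    have hdisj : Disjoint v u := (sdiff_disjoint.mono_left hvA)
    refine mem_filter.2 ⟨mem_powersetCard.2 ⟨?_, ?_⟩, subset_union_right⟩
    · exact union_subset (hvA.trans sdiff_subset) hu
    · rw [card_union_of_disjoint hdisj, hvcard]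
      omega
  · intro s hs
    exact sdiff_union_of_subset (mem_filter.1 hs).2
  · intro v hv
    have hdisj : Disjoint v u := (sdiff_disjoint.mono_left (mem_powersetCard.1 hv).1)
    rw [union_sdiff_right, sdiff_eq_self_of_disjoint hdisj]

lemma E_shift (A : Finset ι) {j : ℕ} (hj : j ≤ A.card) (x : ι → ℝ) (t : ℝ) :
    E A j (fun a => x a + t) =
      ∑ m ∈ range (j+1), ((A.card - m).choose (j - m) : ℝ) * t^(j-m) * E A m x := by
  have h1 : E A j (fun a => x a + t) =
      ∑ s ∈ A.powersetCard j, ∑ u ∈ s.powerset, (∏ a ∈ u, x a) * t ^ (s \ u).card := by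
    refine sum_congr rfl fun s hs => ?_
    rw [prod_add]
    exact sum_congr rfl fun u hu => by rw [prod_const]
  have h2 : ∑ s ∈ A.powersetCard j, ∑ u ∈ s.powerset, (∏ a ∈ u, x a) * t ^ (s \ u).card
      = ∑ u ∈ A.powerset, ∑ s ∈ (A.powersetCard j).filter (fun s => u ⊆ s),
          (∏ a ∈ u, x a) * t ^ (s \ u).card := by
    refine sum_comm' fun s u => ?_
    simp only [mem_powersetCard, mem_powerset, mem_filter]
    constructor
    · rintro ⟨⟨hsA, hsc⟩, hus⟩
      exact ⟨⟨⟨hsA, hsc⟩, hus⟩, hus.trans hsA⟩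
    · rintro ⟨⟨⟨hsA, hsc⟩, hus⟩, huA⟩
      exact ⟨⟨hsA, hsc⟩, hus⟩
  have h3 : ∀ u ∈ A.powerset,
      ∑ s ∈ (A.powersetCard j).filter (fun s => u ⊆ s), (∏ a ∈ u, x a) * t ^ (s \ u).card
      = if u.card ≤ j then
          ((A.card - u.card).choose (j - u.card) : ℝ) * t ^ (j - u.card) * ∏ a ∈ u, x a
        else 0 := by
    intro u hu
    by_cases hcle : u.card ≤ j
    · rw [if_pos hcle]
      have hc : ∀ s ∈ (A.powersetCard j).filter (fun s => u ⊆ s),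
          (∏ a ∈ u, x a) * t ^ (s \ u).card = (∏ a ∈ u, x a) * t ^ (j - u.card) := by
        intro s hs
        obtain ⟨hs1, hs2⟩ := mem_filter.1 hs
        rw [card_sdiff_of_subset hs2, (mem_powersetCard.1 hs1).2]
      rw [sum_congr rfl hc, sum_const, count_supersets (mem_powerset.1 hu) hcle,
        nsmul_eq_mul]
      ring
    · rw [if_neg hcle]
      have he : (A.powersetCard j).filter (fun s => u ⊆ s) = ∅ := by
        refine filter_eq_empty_iff.2 fun s hs hus => hcle ?_
        rw [← (mem_powersetCard.1 hs).2]
        exact card_le_card hus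
      rw [he, sum_empty]
  rw [h1, h2, sum_congr rfl h3]
  rw [sum_powerset]
  have h4 : ∀ m ∈ range (A.card + 1),
      (∑ u ∈ A.powersetCard m, if u.card ≤ j then
          ((A.card - u.card).choose (j - u.card) : ℝ) * t ^ (j - u.card) * ∏ a ∈ u, x a
        else 0)
      = if m ≤ j then ((A.card - m).choose (j - m) : ℝ) * t^(j-m) * E A m x else 0 := by
    intro m hm
    have hcongr : ∀ u ∈ A.powersetCard m, (if u.card ≤ j then
          ((A.card - u.card).choose (j - u.card) : ℝ) * t ^ (j - u.card) * ∏ a ∈ u, x a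
        else 0)
        = if m ≤ j then ((A.card - m).choose (j - m) : ℝ) * t ^ (j - m) * ∏ a ∈ u, x a
          else 0 := by
      intro u hu
      rw [(mem_powersetCard.1 hu).2]
    rw [sum_congr rfl hcongr]
    by_cases hmj : m ≤ j
    · simp only [if_pos hmj, E, mul_sum]
    · simp only [if_neg hmj, sum_const_zero]
  rw [sum_congr rfl h4, ← sum_filter]
  congr 1
  ext m
  simp only [mem_filter, mem_range]
  omega

lemma sum_E_erase (A : Finset ι) (j : ℕ) (x : ι → ℝ) :
    ∑ i ∈ A, E (A.erase i) j x = ((A.card - j : ℕ) : ℝ) * E A j x := by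
  have h1 : ∑ i ∈ A, E (A.erase i) j x
      = ∑ s ∈ A.powersetCard j, ∑ i ∈ A \ s, ∏ a ∈ s, x a := by
    refine sum_comm' fun i s => ?_
    simp only [mem_powersetCard, mem_sdiff, subset_erase]
    tauto
  rw [h1, E, mul_sum]
  refine sum_congr rfl fun s hs => ?_
  obtain ⟨hsA, hsc⟩ := mem_powersetCard.1 hs
  rw [sum_const, card_sdiff_of_subset hsA, hsc, nsmul_eq_mul]

lemma sum_mul_E_erase (A : Finset ι) (j : ℕ) (hj : j + 1 ≤ A.card) (x : ι → ℝ) :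
    ∑ i ∈ A, x i * E (A.erase i) j x = ((j + 1 : ℕ) : ℝ) * E A (j+1) x := by
  have h1 : ∀ i ∈ A, x i * E (A.erase i) j x = E A (j+1) x - E (A.erase i) (j+1) x := by
    intro i hi
    rw [E_erase A hi j x]
    ring
  rw [sum_congr rfl h1, sum_sub_distrib, sum_const, sum_E_erase, nsmul_eq_mul]
  have hc : ((A.card - (j+1) : ℕ) : ℝ) = (A.card : ℝ) - ((j+1 : ℕ) : ℝ) := by
    push_cast [Nat.cast_sub hj]
    ring
  rw [hc]
  ring

lemma E_update (A : Finset ι) {i : ι} (hi : i ∈ A) (j : ℕ) (x : ι → ℝ) :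
    E A (j+1) (Function.update x i 0) = E (A.erase i) (j+1) x := by
  rw [E_erase A hi j, Function.update_self, zero_mul, add_zero]
  refine E_congr (j+1) fun a ha => ?_
  exact Function.update_of_ne (ne_of_mem_erase ha) _ _

lemma E_cont (A : Finset ι) (j : ℕ) (x : ι → ℝ) :
    Continuous (fun t : ℝ => E A j (fun a => x a + t)) := by
  unfold E
  apply continuous_finset_sum
  intro s hs
  apply continuous_finset_prod
  intro a ha
  exact continuous_const.add continuous_id

lemma E_shift_pos (A : Finset ι) {m : ℕ} (hm1 : 1 ≤ m) (hmA : m ≤ A.card) {x : ι → ℝ}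
    (hx : ∀ m', 1 ≤ m' → m' ≤ m → 0 < E A m' x) {t : ℝ} (ht : 0 ≤ t) :
    0 < E A m (fun a => x a + t) := by
  rw [E_shift A hmA]
  apply sum_pos'
  · intro q hq
    apply mul_nonneg (mul_nonneg (Nat.cast_nonneg _) (pow_nonneg ht _))
    rcases Nat.eq_zero_or_pos q with rfl | hq1
    · rw [E_zero]; norm_num
    · exact (hx q hq1 (by simp only [mem_range] at hq; omega)).le
  · refine ⟨m, self_mem_range_succ m, ?_⟩
    rw [Nat.sub_self]
    simp only [Nat.choose_zero_right, Nat.cast_one, pow_zero, one_mul]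
    exact hx m hm1 le_rfl

lemma E_shift_pos' (A : Finset ι) {m : ℕ} (hm1 : 1 ≤ m) (hmA : m ≤ A.card) {x : ι → ℝ}
    (hx : ∀ m', 1 ≤ m' → m' ≤ m → 0 ≤ E A m' x) {t : ℝ} (ht : 0 < t) :
    0 < E A m (fun a => x a + t) := by
  rw [E_shift A hmA]
  apply sum_pos'
  · intro q hq
    apply mul_nonneg (mul_nonneg (Nat.cast_nonneg _) (pow_nonneg ht.le _))
    rcases Nat.eq_zero_or_pos q with rfl | hq1
    · rw [E_zero]; norm_num
    · exact hx q hq1 (by simp only [mem_range] at hq; omega)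
  · refine ⟨0, by simp, ?_⟩
    rw [E_zero, Nat.sub_zero, Nat.sub_zero, mul_one]
    have hcp : 0 < (A.card).choose m := Nat.choose_pos hmA
    positivity

lemma keyP : ∀ (N : ℕ) (A : Finset ι) (k : ℕ), A.card + k ≤ N → 1 ≤ k →
    ∀ x : ι → ℝ, (∀ m, 1 ≤ m → m ≤ k → 0 < E A m x) →
    ∀ i ∈ A, 0 < E (A.erase i) (k-1) x := by
  intro N
  induction N with
  | zero => intro A k hN hk1; omega
  | succ N IH =>
    intro A k hN hk1 x hx i hi
    have hApos : 0 < A.card := card_pos.2 ⟨i, hi⟩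
    have hkA : k ≤ A.card := by
      by_contra h
      have h2 := hx k hk1 le_rfl
      rw [E_eq_zero A (by omega)] at h2; exact lt_irrefl _ h2
    obtain ⟨m, rfl⟩ : ∃ m, k = m + 1 := ⟨k - 1, by omega⟩
    rw [Nat.add_sub_cancel]
    set B := A.erase i with hBdef
    have hBcard : B.card = A.card - 1 := card_erase_of_mem hi
    rcases Nat.eq_zero_or_pos m with rfl | hm1
    · rw [E_zero]; norm_num
    have S1 : ∀ t : ℝ, 0 ≤ t → ∀ q, 1 ≤ q → q ≤ m + 1 → 0 < E A q (fun a => x a + t) :=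
      fun t ht q h1 h2 =>
        E_shift_pos A h1 (h2.trans hkA) (fun q' h1' h2' => hx q' h1' (h2'.trans h2)) ht
    have S2 : ∀ t : ℝ, 0 ≤ t → ∀ j, j ≤ m - 1 → 0 < E B j (fun a => x a + t) := by
      intro t ht j hj
      rcases Nat.eq_zero_or_pos j with rfl | hj1
      · rw [E_zero]; norm_num
      · have happ := IH A (j+1) (by omega) (by omega) (fun a => x a + t)
          (fun q h1 h2 => S1 t ht q h1 (by omega)) i hi
        simpa using happ
    have S2x : ∀ j, j ≤ m - 1 → 0 < E B j x := by
      intro j hj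
      have := S2 0 le_rfl j hj
      simpa using this
    by_contra hneg
    push_neg at hneg
    set f : ℝ → ℝ := fun t => E B m (fun a => x a + t) with hfdef
    have hf0 : f 0 = E B m x := E_congr m (fun a ha => add_zero _)
    have hfcont : Continuous f := E_cont B m x
    have hmB : m ≤ B.card := by omega
    set T : ℝ := 1 - E B m x with hTdef
    have hT1 : 1 ≤ T := by rw [hTdef]; linarith
    have hT0 : 0 ≤ T := by linarith
    have hfT : 0 < f T := by
      have hexp : f T = ∑ q ∈ range (m+1),
          ((B.card - q).choose (m - q) : ℝ) * T^(m-q) * E B q x := E_shift B hmB x T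
      rw [hexp]
      have hsub : ({0, m} : Finset ℕ) ⊆ range (m+1) := by
        intro q hq; simp only [mem_insert, mem_singleton] at hq
        rcases hq with rfl | rfl <;> simp [mem_range]
      have hle : ∑ q ∈ ({0, m} : Finset ℕ),
          ((B.card - q).choose (m - q) : ℝ) * T^(m-q) * E B q x
          ≤ ∑ q ∈ range (m+1), ((B.card - q).choose (m - q) : ℝ) * T^(m-q) * E B q x := by
        apply sum_le_sum_of_subset_of_nonneg hsub
        intro q hq hq'
        simp only [mem_insert, mem_singleton, not_or] at hq'
        simp only [mem_range] at hq
        apply mul_nonneg (mul_nonneg (Nat.cast_nonneg _) (pow_nonneg hT0 _))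
        exact (S2x q (by omega)).le
      have hpair : ∑ q ∈ ({0, m} : Finset ℕ),
          ((B.card - q).choose (m - q) : ℝ) * T^(m-q) * E B q x
          = ((B.card).choose m : ℝ) * T^m * E B 0 x
            + ((B.card - m).choose 0 : ℝ) * T^0 * E B m x := by
        rw [sum_pair (by omega : (0:ℕ) ≠ m)]
        norm_num
      have hc1 : (1:ℝ) ≤ ((B.card).choose m : ℝ) := by
        exact_mod_cast Nat.succ_le_of_lt (Nat.choose_pos hmB)
      have hTm : T ≤ T^m := le_self_pow₀ hT1 (by omega)
      have hmul : (1:ℝ) * T^m ≤ ((B.card).choose m : ℝ) * T^m :=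
        mul_le_mul_of_nonneg_right hc1 (pow_nonneg hT0 m)
      rw [E_zero] at hpair
      simp only [Nat.choose_zero_right, Nat.cast_one, pow_zero] at hpair
      calc (0:ℝ) < 1 := one_pos
        _ ≤ ∑ q ∈ ({0, m} : Finset ℕ),
            ((B.card - q).choose (m - q) : ℝ) * T^(m-q) * E B q x := by
              rw [hpair]; rw [hTdef] at hTm ⊢; nlinarith
        _ ≤ _ := hle
    obtain ⟨t0, ht0mem, ht0⟩ : ∃ t0 ∈ Set.Icc (0:ℝ) T, f t0 = 0 := by
      have h := intermediate_value_Icc hT0 hfcont.continuousOn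
      have h0 : (0:ℝ) ∈ Set.Icc (f 0) (f T) := ⟨by rw [hf0]; exact hneg, hfT.le⟩
      exact h h0
    have ht0pos : 0 ≤ t0 := ht0mem.1
    set ν : ι → ℝ := fun a => x a + t0 with hνdef
    have hν1 : ∀ q, 1 ≤ q → q ≤ m+1 → 0 < E A q ν := S1 t0 ht0pos
    have hν2 : ∀ q, q ≤ m-1 → 0 < E B q ν := S2 t0 ht0pos
    have hν3 : E B m ν = 0 := ht0
    have hν4 : 0 < E B (m+1) ν := by
      have her := E_erase A hi m ν
      have h5 := hν1 (m+1) (by omega) le_rfl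
      rw [her, hν3, mul_zero, add_zero] at h5
      exact h5
    have hm1B : m + 1 ≤ B.card := by
      by_contra h
      rw [E_eq_zero B (by omega)] at hν4; exact lt_irrefl _ hν4
    have hQ : ∀ j ∈ B, 0 ≤ E (B.erase j) m ν := by
      intro j hj
      have hpos : ∀ ε : ℝ, 0 < ε → 0 < E (B.erase j) m (fun a => ν a + ε) := by
        intro ε hε
        have hyp : ∀ q, 1 ≤ q → q ≤ m+1 → 0 < E B q (fun a => ν a + ε) := by
          intro q h1 h2
          apply E_shift_pos' B h1 (h2.trans hm1B) ?_ hε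
          intro q' h1' h2'
          rcases (by omega : q' ≤ m - 1 ∨ q' = m ∨ q' = m+1) with h | rfl | rfl
          · exact (hν2 q' h).le
          · exact le_of_eq hν3.symm
          · exact hν4.le
        have := IH B (m+1) (by omega) (by omega) (fun a => ν a + ε) hyp j hj
        simpa using this
      have hc : Continuous (fun ε : ℝ => E (B.erase j) m (fun a => ν a + ε)) :=
        E_cont _ m ν
      have hlim : Filter.Tendsto (fun ε : ℝ => E (B.erase j) m (fun a => ν a + ε))
          (nhdsWithin 0 (Set.Ioi 0)) (nhds (E (B.erase j) m ν)) := by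
        have h0 : E (B.erase j) m (fun a => ν a + (0:ℝ)) = E (B.erase j) m ν :=
          E_congr m (fun a ha => add_zero _)
        simpa [h0] using ((hc.tendsto 0).mono_left nhdsWithin_le_nhds)
      exact ge_of_tendsto hlim
        (Filter.eventually_of_mem self_mem_nhdsWithin (fun ε hε => (hpos ε hε).le))
    have hsum : ∑ j ∈ B, E (B.erase j) m ν = 0 := by
      rw [sum_E_erase B m ν, hν3, mul_zero]
    have hall : ∀ j ∈ B, E (B.erase j) m ν = 0 := (sum_eq_zero_iff_of_nonneg hQ).1 hsum
    have hfin := sum_mul_E_erase B m hm1B ν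
    rw [sum_congr rfl (fun j hj => by rw [hall j hj, mul_zero]), sum_const_zero] at hfin
    have hcontra : (0:ℝ) < ((m+1 : ℕ) : ℝ) * E B (m+1) ν := by positivity
    linarith [hfin ▸ hcontra]

/-- The `j`-th elementary symmetric polynomial of `x : Fin n → ℝ`. -/
def esymm (n j : ℕ) (x : Fin n → ℝ) : ℝ :=
  ∑ s ∈ Finset.powersetCard j (Finset.univ : Finset (Fin n)), ∏ i ∈ s, x i

theorem stmt_12 (n k : ℕ) (hk2 : 2 ≤ k) (hkn : k ≤ n) (γ : Fin n → ℝ)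
    (hγ : ∀ j, 1 ≤ j → j ≤ k → 0 < esymm n j γ) (i : Fin n) :
    0 < esymm n (k - 1) (Function.update γ i 0) := by
  have hcard : (Finset.univ : Finset (Fin n)).card = n := Finset.card_univ.trans (Fintype.card_fin n)
  have hesymm : ∀ (j : ℕ) (x : Fin n → ℝ), esymm n j x = E Finset.univ j x := fun _ _ => rfl
  have hγ' : ∀ m, 1 ≤ m → m ≤ k → 0 < E (Finset.univ : Finset (Fin n)) m γ := by
    intro m h1 h2
    rw [← hesymm]
    exact hγ m h1 h2
  have h := keyP (n + k) (Finset.univ : Finset (Fin n)) k (by omega) (by omega) γ hγ' i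
    (Finset.mem_univ i)
  have hk1 : k - 1 = (k - 2) + 1 := by omega
  rw [hesymm, hk1, E_update (Finset.univ : Finset (Fin n)) (Finset.mem_univ i) (k-2) γ, ← hk1]
  exact h
end

section
/- For μ, γ in the Gårding cone Γ_k ⊂ ℝⁿ, the inequality k·σ_k(μ)^{1/k}·σ_k(γ)^{(k−1)/k} ≤ Σ_{i=1}^n μᵢ·σ_{k−1,i}(γ) holds, with equality when γ = σ_k(μ)^{−1/k}·μ. -/
open Finset Polynomial

namespace Garding

variable {n : ℕ}

/-- elementary symmetric function of `x` restricted to index set `A` -/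
def S (A : Finset (Fin n)) (j : ℕ) (x : Fin n → ℝ) : ℝ :=
  ∑ s ∈ A.powersetCard j, ∏ i ∈ s, x i

lemma esymm_eq (j : ℕ) (x : Fin n → ℝ) : esymm n j x = S Finset.univ j x := rfl

@[simp] lemma S_zero (A : Finset (Fin n)) (x : Fin n → ℝ) : S A 0 x = 1 := by
  simp [S]

lemma S_one (A : Finset (Fin n)) (x : Fin n → ℝ) : S A 1 x = ∑ i ∈ A, x i := by
  simp [S, Finset.powersetCard_one, Finset.sum_map]

lemma S_eq_zero {A : Finset (Fin n)} {j : ℕ} (h : A.card < j) (x : Fin n → ℝ) : S A j x = 0 := by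
  simp [S, Finset.powersetCard_eq_empty.2 h]

lemma card_le_of_S_pos {A : Finset (Fin n)} {j : ℕ} {x : Fin n → ℝ} (h : 0 < S A j x) :
    j ≤ A.card := by
  by_contra hc
  rw [S_eq_zero (by omega) x] at h
  exact lt_irrefl _ h

/-- removing a zero coordinate -/
lemma S_update_zero (A : Finset (Fin n)) (j : ℕ) (x : Fin n → ℝ) (i : Fin n) :
    S A j (Function.update x i 0) = S (A.erase i) j x := by
  classical
  unfold S
  rw [← Finset.sum_filter_add_sum_filter_not (A.powersetCard j) (fun s => i ∈ s)]
  have h1 : ∑ s ∈ (A.powersetCard j).filter (fun s => i ∈ s), ∏ l ∈ s, Function.update x i 0 l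
      = 0 := by
    refine Finset.sum_eq_zero fun s hs => ?_
    rw [Finset.mem_filter] at hs
    exact Finset.prod_eq_zero hs.2 (by simp)
  rw [h1, zero_add]
  have h2 : (A.powersetCard j).filter (fun s => i ∉ s) = (A.erase i).powersetCard j := by
    ext s
    simp only [Finset.mem_filter, Finset.mem_powersetCard, Finset.subset_erase]
    tauto
  rw [h2]
  refine Finset.sum_congr rfl fun s hs => Finset.prod_congr rfl fun l hl => ?_
  rw [Finset.mem_powersetCard] at hs
  have : l ≠ i := by
    rintro rfl
    exact (Finset.mem_erase.1 (hs.1 hl)).1 rfl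
  simp [Function.update_apply, this]

/-- splitting off one variable -/
lemma S_erase {A : Finset (Fin n)} {i : Fin n} (hi : i ∈ A) (j : ℕ) (x : Fin n → ℝ) :
    S A (j+1) x = S (A.erase i) (j+1) x + x i * S (A.erase i) j x := by
  classical
  unfold S
  rw [← Finset.sum_filter_add_sum_filter_not (A.powersetCard (j+1)) (fun s => i ∈ s)]
  have h2 : (A.powersetCard (j+1)).filter (fun s => i ∉ s) = (A.erase i).powersetCard (j+1) := by
    ext s
    simp only [Finset.mem_filter, Finset.mem_powersetCard, Finset.subset_erase]
    tauto
  rw [h2, add_comm]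
  congr 1
  rw [Finset.mul_sum]
  refine Finset.sum_nbij' (fun s => s.erase i) (fun s => insert i s) ?_ ?_ ?_ ?_ ?_
  · intro s hs
    rw [Finset.mem_filter, Finset.mem_powersetCard] at hs
    rw [Finset.mem_powersetCard]
    constructor
    · exact Finset.erase_subset_erase _ hs.1.1
    · rw [Finset.card_erase_of_mem hs.2, hs.1.2]
      omega
  · intro s hs
    rw [Finset.mem_powersetCard] at hs
    rw [Finset.mem_filter, Finset.mem_powersetCard]
    have hins : i ∉ s := fun h => (Finset.mem_erase.1 (hs.1 h)).1 rfl
    refine ⟨⟨?_, ?_⟩, Finset.mem_insert_self _ _⟩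
    · exact Finset.insert_subset hi ((hs.1.trans (Finset.erase_subset _ _)))
    · rw [Finset.card_insert_of_notMem hins, hs.2]
  · intro s hs
    rw [Finset.mem_filter] at hs
    exact Finset.insert_erase hs.2
  · intro s hs
    rw [Finset.mem_powersetCard] at hs
    have hins : i ∉ s := fun h => (Finset.mem_erase.1 (hs.1 h)).1 rfl
    exact Finset.erase_insert hins
  · intro s hs
    rw [Finset.mem_filter] at hs
    exact (Finset.mul_prod_erase s x hs.2).symm

/-- the core double-counting bijection -/
lemma sum_pair (A : Finset (Fin n)) (K : ℕ) (g x : Fin n → ℝ) :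
    ∑ s ∈ A.powersetCard (K+1), ∑ i ∈ s, g i * ∏ l ∈ s.erase i, x l
      = ∑ i ∈ A, g i * S (A.erase i) K x := by
  classical
  have hR : ∀ i ∈ A, g i * S (A.erase i) K x
      = ∑ s ∈ (A.erase i).powersetCard K, g i * ∏ l ∈ s, x l := by
    intro i _
    rw [S, Finset.mul_sum]
  rw [Finset.sum_congr rfl hR, Finset.sum_sigma' A, Finset.sum_sigma' (A.powersetCard (K+1))]
  refine Finset.sum_nbij' (fun p => ⟨p.2, p.1.erase p.2⟩) (fun p => ⟨insert p.1 p.2, p.1⟩)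
    ?_ ?_ ?_ ?_ ?_
  · rintro ⟨s, i⟩ hp
    rw [Finset.mem_sigma, Finset.mem_powersetCard] at hp
    rw [Finset.mem_sigma, Finset.mem_powersetCard]
    obtain ⟨⟨hsub, hcard⟩, hi⟩ := hp
    refine ⟨hsub hi, ?_, ?_⟩
    · exact Finset.erase_subset_erase _ hsub
    · rw [Finset.card_erase_of_mem hi, hcard]
      omega
  · rintro ⟨i, s⟩ hp
    rw [Finset.mem_sigma, Finset.mem_powersetCard] at hp
    rw [Finset.mem_sigma, Finset.mem_powersetCard]
    obtain ⟨hi, hsub, hcard⟩ := hp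
    have hins : i ∉ s := fun h => (Finset.mem_erase.1 (hsub h)).1 rfl
    refine ⟨⟨?_, ?_⟩, Finset.mem_insert_self _ _⟩
    · exact Finset.insert_subset hi (hsub.trans (Finset.erase_subset _ _))
    · rw [Finset.card_insert_of_notMem hins, hcard]
  · rintro ⟨s, i⟩ hp
    rw [Finset.mem_sigma] at hp
    exact Sigma.ext (Finset.insert_erase hp.2) HEq.rfl
  · rintro ⟨i, s⟩ hp
    rw [Finset.mem_sigma, Finset.mem_powersetCard] at hp
    have hins : i ∉ s := fun h => (Finset.mem_erase.1 (hp.2.1 h)).1 rfl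
    exact Sigma.ext rfl (heq_of_eq (Finset.erase_insert hins))
  · rintro ⟨s, i⟩ _
    rfl

/-- Euler-type identity -/
lemma euler (A : Finset (Fin n)) (K : ℕ) (x : Fin n → ℝ) :
    ∑ i ∈ A, x i * S (A.erase i) K x = (K+1 : ℝ) * S A (K+1) x := by
  classical
  rw [← sum_pair A K x x, S, Finset.mul_sum]
  refine Finset.sum_congr rfl fun s hs => ?_
  rw [Finset.mem_powersetCard] at hs
  have h : ∀ i ∈ s, x i * ∏ l ∈ s.erase i, x l = ∏ l ∈ s, x l := fun i hi =>
    Finset.mul_prod_erase s x hi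
  rw [Finset.sum_congr rfl h, Finset.sum_const, hs.2, nsmul_eq_mul]
  push_cast
  ring

/-- homogeneity -/
lemma S_smul (A : Finset (Fin n)) (j : ℕ) (c : ℝ) (x : Fin n → ℝ) :
    S A j (fun i => c * x i) = c ^ j * S A j x := by
  classical
  unfold S
  rw [Finset.mul_sum]
  refine Finset.sum_congr rfl fun s hs => ?_
  rw [Finset.mem_powersetCard] at hs
  rw [Finset.prod_mul_distrib, Finset.prod_const, hs.2]

/-- positivity for positive entries -/
lemma S_pos_of_pos {A : Finset (Fin n)} {x : Fin n → ℝ} (hx : ∀ i ∈ A, 0 < x i) {j : ℕ}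
    (hj : j ≤ A.card) : 0 < S A j x := by
  classical
  unfold S
  refine Finset.sum_pos' (fun s hs => Finset.prod_nonneg fun i hi => ?_) ?_
  · rw [Finset.mem_powersetCard] at hs
    exact (hx i (hs.1 hi)).le
  · obtain ⟨t, ht⟩ := Finset.powersetCard_nonempty_of_le hj
    refine ⟨t, ht, Finset.prod_pos fun i hi => ?_⟩
    rw [Finset.mem_powersetCard] at ht
    exact hx i (ht.1 hi)


/-! ### Polynomial machinery -/

lemma multiset_sum_pos : ∀ (s : Multiset ℝ), (∀ a ∈ s, 0 < a) → s ≠ 0 → 0 < s.sum := by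
  intro s
  refine Multiset.induction_on s (fun _ h => absurd rfl h) ?_
  intro a t ih h _
  rw [Multiset.sum_cons]
  rcases eq_or_ne t 0 with rfl | ht
  · simpa using h a (Multiset.mem_cons_self a 0)
  · exact add_pos (h a (Multiset.mem_cons_self a t))
      (ih (fun b hb => h b (Multiset.mem_cons_of_mem hb)) ht)

variable {n : ℕ}

/-- `∏ (X + x l)` over an index set -/
noncomputable def polyP (A : Finset (Fin n)) (x : Fin n → ℝ) : ℝ[X] :=
  ∏ l ∈ A, (X + C (x l))

lemma polyP_monic (A : Finset (Fin n)) (x : Fin n → ℝ) : (polyP A x).Monic :=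
  monic_prod_of_monic _ _ fun i _ => monic_X_add_C (x i)

lemma polyP_natDegree (A : Finset (Fin n)) (x : Fin n → ℝ) :
    (polyP A x).natDegree = A.card := by
  unfold polyP
  rw [Polynomial.natDegree_prod _ _ (fun i _ => Polynomial.X_add_C_ne_zero (x i))]
  simp [Polynomial.natDegree_X_add_C]

lemma polyP_splits (A : Finset (Fin n)) (x : Fin n → ℝ) :
    (polyP A x).Splits :=
  Splits.prod fun i _ =>
    Splits.of_natDegree_le_one (by rw [Polynomial.natDegree_X_add_C])

lemma polyP_coeff (A : Finset (Fin n)) (x : Fin n → ℝ) {r : ℕ} (hr : r ≤ A.card) :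
    (polyP A x).coeff r = S A (A.card - r) x := by
  rw [polyP, Finset.prod_X_add_C_coeff _ _ hr]
  rfl

lemma splits_derivative {p : ℝ[X]} (hp : p.Splits) :
    p.derivative.Splits := by
  by_cases h0 : derivative p = 0
  · rw [h0]; exact Splits.zero
  have hd : p.natDegree ≠ 0 := fun h => h0 (derivative_of_natDegree_zero h)
  rw [splits_iff_card_roots]
  have h1 : Multiset.card p.roots = p.natDegree := splits_iff_card_roots.1 hp
  have h2 := Polynomial.card_roots_le_derivative p
  have h3 : (derivative p).natDegree ≤ p.natDegree - 1 := natDegree_derivative_le p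
  have h4 := Polynomial.card_roots' (derivative p)
  omega

lemma iter_pack {p : ℝ[X]} (hm : 0 < p.leadingCoeff) (hs : p.Splits) :
    ∀ r, r ≤ p.natDegree →
      (derivative^[r] p).natDegree = p.natDegree - r ∧ 0 < (derivative^[r] p).leadingCoeff ∧
      (derivative^[r] p).Splits := by
  intro r
  induction r with
  | zero => intro _; simpa using ⟨hm, hs⟩
  | succ d ih =>
    intro hd
    obtain ⟨hdeg, hlead, hsplit⟩ := ih (by omega)
    set q := derivative^[d] p with hq
    have hqd : 0 < q.natDegree := by omega
    have hstep : derivative^[d+1] p = derivative q := by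
      rw [hq, Function.iterate_succ_apply']
    rw [hstep]
    have hcoeff : (derivative q).coeff (q.natDegree - 1)
        = q.coeff (q.natDegree) * ((q.natDegree - 1 : ℕ) + 1 : ℝ) := by
      rw [Polynomial.coeff_derivative]
      congr 2
      omega
    have hpos : (0:ℝ) < ((q.natDegree - 1 : ℕ) + 1 : ℝ) := by positivity
    have hne : (derivative q).coeff (q.natDegree - 1) ≠ 0 := by
      rw [hcoeff]
      exact ne_of_gt (mul_pos hlead hpos)
    have hngeq : (derivative q).natDegree = q.natDegree - 1 :=
      le_antisymm (natDegree_derivative_le q) (le_natDegree_of_ne_zero hne)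
    refine ⟨by omega, ?_, splits_derivative hsplit⟩
    rw [Polynomial.leadingCoeff, hngeq, hcoeff]
    exact mul_pos hlead hpos

lemma eval_pos_of_coeff {Q : ℝ[X]} (h0 : 0 < Q.coeff 0) (h : ∀ r, 0 ≤ Q.coeff r) {t : ℝ}
    (ht : 0 ≤ t) : 0 < Q.eval t := by
  rw [Polynomial.eval_eq_sum_range]
  have hmem : 0 ∈ Finset.range (Q.natDegree + 1) := by simp
  calc (0:ℝ) < Q.coeff 0 * t ^ 0 := by simpa using h0
    _ ≤ _ := Finset.single_le_sum (f := fun i => Q.coeff i * t ^ i)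
        (fun i _ => mul_nonneg (h i) (pow_nonneg ht i)) hmem

lemma exists_top_root {u : ℝ[X]} (hlead : 0 < u.leadingCoeff) (hdeg : 0 < u.natDegree)
    {t₀ : ℝ} (h : u.eval t₀ ≤ 0) :
    ∃ ρ, t₀ ≤ ρ ∧ u.eval ρ = 0 ∧ ∀ t, ρ < t → 0 < u.eval t := by
  classical
  have hu : u ≠ 0 := fun h' => by simp [h'] at hlead
  have htop : Filter.Tendsto (fun x => u.eval x) Filter.atTop Filter.atTop := by
    have := u.tendsto_atTop_of_leadingCoeff_nonneg
      (Polynomial.natDegree_pos_iff_degree_pos.1 hdeg) hlead.le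
    simpa using this
  have key : ∀ t : ℝ, u.eval t ≤ 0 → ∃ r, t ≤ r ∧ u.IsRoot r := by
    intro t ht
    obtain ⟨T, hT0, hTt⟩ :=
      ((htop.eventually_gt_atTop 0).and (Filter.eventually_ge_atTop t)).exists
    have hmem : (0:ℝ) ∈ Set.Icc (u.eval t) (u.eval T) := by
      constructor
      · exact ht
      · exact hT0.le
    obtain ⟨r, hr, hr0⟩ := intermediate_value_Icc hTt (u.continuous.continuousOn) hmem
    exact ⟨r, hr.1, hr0⟩
  set R := u.roots.toFinset.filter (fun r => t₀ ≤ r) with hR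
  have hne : R.Nonempty := by
    obtain ⟨r, hr1, hr2⟩ := key t₀ h
    refine ⟨r, ?_⟩
    rw [hR, Finset.mem_filter, Multiset.mem_toFinset, Polynomial.mem_roots']
    exact ⟨⟨hu, hr2⟩, hr1⟩
  set ρ := R.max' hne with hρ
  have hρR : ρ ∈ R := R.max'_mem hne
  have hρt₀ : t₀ ≤ ρ := (Finset.mem_filter.1 hρR).2
  have hρroot : u.eval ρ = 0 :=
    (Polynomial.mem_roots'.1 (Multiset.mem_toFinset.1 (Finset.mem_filter.1 hρR).1)).2
  refine ⟨ρ, hρt₀, hρroot, fun t htρ => ?_⟩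
  by_contra hc
  push_neg at hc
  obtain ⟨r, hr1, hr2⟩ := key t hc
  have hrR : r ∈ R := by
    rw [hR, Finset.mem_filter, Multiset.mem_toFinset, Polynomial.mem_roots']
    exact ⟨⟨hu, hr2⟩, le_trans hρt₀ (le_trans htρ.le hr1)⟩
  have := R.le_max' r hrR
  rw [← hρ] at this
  linarith

lemma derivative_eval_pos {v : ℝ[X]} (hs : v.Splits) (hlead : 0 < v.leadingCoeff)
    (hdeg : 0 < v.natDegree) {ρ : ℝ} (hroots : ∀ r ∈ v.roots, r < ρ) :
    0 < v.derivative.eval ρ := by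
  classical
  have hv := Splits.eq_prod_roots hs
  have hcard : Multiset.card v.roots = v.natDegree := splits_iff_card_roots.1 hs
  have hterm : ∀ i ∈ v.roots,
      0 < Polynomial.eval ρ ((v.roots.erase i).map (fun a => X - C a)).prod := by
    intro i _
    rw [show Polynomial.eval ρ ((v.roots.erase i).map (fun a => X - C a)).prod
        = (Polynomial.evalRingHom ρ) ((v.roots.erase i).map (fun a => X - C a)).prod from rfl]
    rw [map_multiset_prod (Polynomial.evalRingHom ρ), Multiset.map_map]
    refine Multiset.prod_pos fun b hb => ?_
    rw [Multiset.mem_map] at hb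
    obtain ⟨a, ha, rfl⟩ := hb
    have haρ : a < ρ := hroots a (Multiset.mem_of_mem_erase ha)
    simp only [Function.comp_apply, Polynomial.coe_evalRingHom, Polynomial.eval_sub,
      Polynomial.eval_X, Polynomial.eval_C]
    linarith
  rw [hv, Polynomial.derivative_C_mul, Polynomial.eval_mul, Polynomial.eval_C]
  refine mul_pos hlead ?_
  rw [Polynomial.derivative_prod]
  have h2 : Multiset.map
      (fun i => ((v.roots.erase i).map (fun a => X - C a)).prod * derivative (X - C i)) v.roots
      = Multiset.map (fun i => ((v.roots.erase i).map (fun a => X - C a)).prod) v.roots := by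
    refine Multiset.map_congr rfl fun i _ => ?_
    simp
  rw [h2]
  rw [show Polynomial.eval ρ (Multiset.map
        (fun i => ((v.roots.erase i).map (fun a => X - C a)).prod) v.roots).sum
      = (Polynomial.evalRingHom ρ) (Multiset.map
        (fun i => ((v.roots.erase i).map (fun a => X - C a)).prod) v.roots).sum from rfl]
  rw [map_multiset_sum (Polynomial.evalRingHom ρ), Multiset.map_map]
  refine multiset_sum_pos _ ?_ ?_
  · intro a ha
    rw [Multiset.mem_map] at ha
    obtain ⟨i, hi, rfl⟩ := ha
    exact hterm i hi
  · rw [Ne, Multiset.map_eq_zero]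
    intro h0
    rw [h0] at hcard
    simp only [Multiset.card_zero] at hcard
    omega

lemma iter_deriv_linear_mul (c : ℝ) (B : ℝ[X]) :
    ∀ m : ℕ, 1 ≤ m → derivative^[m] ((X + C c) * B)
      = (X + C c) * derivative^[m] B + (m : ℝ[X]) * derivative^[m-1] B := by
  intro m hm
  induction m with
  | zero => omega
  | succ d ih =>
    rcases Nat.eq_zero_or_pos d with rfl | hd
    · simp [Function.iterate_one, derivative_mul]
      ring
    · have e1 : derivative (derivative^[d] B) = derivative^[d+1] B :=
        (Function.iterate_succ_apply' _ d B).symm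
      have e2 : derivative (derivative^[d-1] B) = derivative^[d] B := by
        have h' : d - 1 + 1 = d := by omega
        conv_rhs => rw [← h']
        exact (Function.iterate_succ_apply' _ (d-1) B).symm
      have e3 : d + 1 - 1 = d := by omega
      rw [Function.iterate_succ_apply', ih hd, derivative_add, derivative_mul, derivative_mul,
        derivative_natCast, e1, e2, e3]
      simp only [derivative_add, derivative_X, derivative_C, add_zero, zero_mul, zero_add]
      push_cast
      ring

/-! ### The restriction lemma -/

theorem erase_pos_top {A : Finset (Fin n)} {x : Fin n → ℝ} {K : ℕ}
    (hx : ∀ m, 1 ≤ m → m ≤ K + 1 → 0 < S A m x) {i : Fin n} (hi : i ∈ A) :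
    0 < S (A.erase i) K x := by
  classical
  rcases Nat.eq_zero_or_pos K with rfl | hK
  · simp
  have hcard : K + 1 ≤ A.card := card_le_of_S_pos (hx (K+1) (by omega) le_rfl)
  rcases eq_or_lt_of_le hcard with heq | hlt
  -- case K + 1 = |A| : all entries positive
  · have hpos : ∀ l ∈ A, 0 < x l := by
      intro l hl
      by_contra hc
      push_neg at hc
      have hroot : (polyP A x).eval (-(x l)) = 0 := by
        unfold polyP
        rw [Polynomial.eval_prod]
        refine Finset.prod_eq_zero hl ?_
        simp
      have hgt : 0 < (polyP A x).eval (-(x l)) := by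
        refine eval_pos_of_coeff ?_ ?_ (by linarith)
        · rw [polyP_coeff A x (Nat.zero_le _), Nat.sub_zero, ← heq]
          exact hx (K+1) (by omega) le_rfl
        · intro r
          rcases le_or_gt r A.card with hr | hr
          · rw [polyP_coeff A x hr]
            rcases Nat.eq_zero_or_pos (A.card - r) with h0 | hpos'
            · rw [h0]; simp
            · exact (hx _ hpos' (by omega)).le
          · rw [Polynomial.coeff_eq_zero_of_natDegree_lt (by rw [polyP_natDegree]; omega)]
      linarith
    refine S_pos_of_pos (fun l hl => hpos l (Finset.mem_of_mem_erase hl)) ?_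
    rw [Finset.card_erase_of_mem hi]
    omega
  -- main case K + 1 < |A|
  · by_contra hneg
    push_neg at hneg
    set m := A.card - (K+1) with hm
    have hm1 : 1 ≤ m := by omega
    set B := polyP (A.erase i) x with hB
    have hBcard : (A.erase i).card = A.card - 1 := Finset.card_erase_of_mem hi
    have hBdeg : B.natDegree = A.card - 1 := by rw [hB, polyP_natDegree, hBcard]
    have hBlead : 0 < B.leadingCoeff := by
      rw [hB, (polyP_monic _ x).leadingCoeff]; norm_num
    have hBsplits : B.Splits := by rw [hB]; exact polyP_splits (A.erase i) x
    set v := derivative^[m-1] B with hv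
    set u := derivative^[m] B with hu
    have huv : u = derivative v := by
      rw [hu, hv]
      have h' : m - 1 + 1 = m := by omega
      conv_lhs => rw [← h']
      exact Function.iterate_succ_apply' _ (m-1) B
    obtain ⟨hvdeg, hvlead, hvsplits⟩ := iter_pack hBlead hBsplits (m-1) (by omega)
    obtain ⟨hudeg, hulead, _⟩ := iter_pack hBlead hBsplits m (by omega)
    rw [← hv] at hvdeg hvlead hvsplits
    rw [← hu] at hudeg hulead
    have hvdeg' : v.natDegree = K + 1 := by rw [hvdeg, hBdeg]; omega
    have hudeg' : u.natDegree = K := by rw [hudeg, hBdeg]; omega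
    have hueval0 : u.eval 0 ≤ 0 := by
      rw [← Polynomial.coeff_zero_eq_eval_zero, hu, Polynomial.coeff_iterate_derivative,
        zero_add, Nat.descFactorial_self, hB, polyP_coeff _ x (by omega)]
      have hKm : (A.erase i).card - m = K := by omega
      rw [hKm, nsmul_eq_mul]
      exact mul_nonpos_of_nonneg_of_nonpos (Nat.cast_nonneg _) hneg
    obtain ⟨ρ, hρ0, hρroot, hρpos⟩ := exists_top_root hulead (by omega) hueval0
    set Q := derivative^[m] (polyP A x) with hQ
    have hfact : polyP A x = (X + C (x i)) * B := by
      rw [hB]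
      unfold polyP
      exact (Finset.mul_prod_erase A _ hi).symm
    have hQuv : Q = (X + C (x i)) * u + (m : ℝ[X]) * v := by
      rw [hQ, hfact, iter_deriv_linear_mul _ _ m hm1, hu, hv]
    have hQpos : 0 < Q.eval ρ := by
      refine eval_pos_of_coeff ?_ ?_ hρ0
      · rw [hQ, Polynomial.coeff_iterate_derivative, zero_add, Nat.descFactorial_self,
          polyP_coeff A x (by omega)]
        have hAm : A.card - m = K + 1 := by omega
        rw [hAm, nsmul_eq_mul]
        have hfac : (0:ℝ) < (Nat.factorial m : ℝ) := by positivity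
        exact mul_pos hfac (hx (K+1) (by omega) le_rfl)
      · intro r
        rw [hQ, Polynomial.coeff_iterate_derivative]
        rcases le_or_gt (r + m) A.card with hr | hr
        · rw [polyP_coeff A x hr, nsmul_eq_mul]
          rcases Nat.eq_zero_or_pos (A.card - (r+m)) with h0 | hpos'
          · rw [h0]
            simp only [S_zero]
            positivity
          · exact mul_nonneg (Nat.cast_nonneg _) (hx _ hpos' (by omega)).le
        · rw [Polynomial.coeff_eq_zero_of_natDegree_lt (by rw [polyP_natDegree]; omega)]
          simp
    have hveval : 0 < v.eval ρ := by
      have h1 : Q.eval ρ = (ρ + x i) * u.eval ρ + (m:ℝ) * v.eval ρ := by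
        rw [hQuv]
        simp [Polynomial.eval_add, Polynomial.eval_mul]
      rw [hρroot, mul_zero, zero_add] at h1
      have hm0 : (0:ℝ) < (m:ℝ) := by exact_mod_cast hm1
      nlinarith [hQpos]
    have hmono : StrictMonoOn (fun t => v.eval t) (Set.Ici ρ) := by
      refine strictMonoOn_of_deriv_pos (convex_Ici ρ) (v.continuous.continuousOn) ?_
      intro t ht
      rw [interior_Ici] at ht
      rw [Polynomial.deriv, ← huv]
      exact hρpos t ht
    have hrootslt : ∀ r ∈ v.roots, r < ρ := by
      intro r hr
      by_contra hc
      push_neg at hc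
      have hroot : v.eval r = 0 := (Polynomial.mem_roots'.1 hr).2
      rcases eq_or_lt_of_le hc with rfl | hlt'
      · linarith
      · have := hmono Set.self_mem_Ici (Set.mem_Ici.2 hc) hlt'
        simp only at this
        rw [hroot] at this
        linarith
    have hfinal := derivative_eval_pos hvsplits hvlead (by omega) hrootslt
    rw [← huv, hρroot] at hfinal
    exact lt_irrefl 0 hfinal

theorem erase_pos {A : Finset (Fin n)} {x : Fin n → ℝ} {k : ℕ}
    (hx : ∀ m, 1 ≤ m → m ≤ k → 0 < S A m x) {i : Fin n} (hi : i ∈ A) :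
    ∀ m, m ≤ k - 1 → 0 < S (A.erase i) m x := by
  intro m hm
  rcases Nat.eq_zero_or_pos m with rfl | hm1
  · simp
  exact erase_pos_top (K := m) (fun j hj1 hj2 => hx j hj1 (by omega)) hi

/-! ### Marcus–Lopes superadditivity -/

lemma titu {a b u v w : ℝ} (hu : 0 < u) (hv : 0 < v) (hw : u + v ≤ w) :
    (a+b)^2 / w ≤ a^2/u + b^2/v := by
  have hw0 : 0 < w := lt_of_lt_of_le (add_pos hu hv) hw
  rw [div_add_div _ _ (ne_of_gt hu) (ne_of_gt hv), div_le_div_iff₀ hw0 (mul_pos hu hv)]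
  nlinarith [sq_nonneg (a*v - b*u),
    mul_nonneg (add_nonneg (mul_nonneg (sq_nonneg a) hv.le) (mul_nonneg (sq_nonneg b) hu.le))
      (sub_nonneg.2 hw)]

theorem super : ∀ (j : ℕ), 1 ≤ j → ∀ (A : Finset (Fin n)) (x y : Fin n → ℝ),
    (∀ m, 1 ≤ m → m ≤ j → 0 < S A m x) → (∀ m, 1 ≤ m → m ≤ j → 0 < S A m y) →
    (∀ m, 1 ≤ m → m ≤ j → 0 < S A m (fun i => x i + y i)) ∧
    S A j x / S A (j-1) x + S A j y / S A (j-1) y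
      ≤ S A j (fun i => x i + y i) / S A (j-1) (fun i => x i + y i) := by
  intro j
  induction j with
  | zero => omega
  | succ J ih =>
    intro _ A x y hx hy
    simp only [Nat.add_sub_cancel]
    rcases Nat.eq_zero_or_pos J with rfl | hJpos
    · -- base case j = 1
      have hx1 := hx 1 le_rfl le_rfl
      have hy1 := hy 1 le_rfl le_rfl
      have hsum : S A (0+1) (fun i => x i + y i) = S A (0+1) x + S A (0+1) y := by
        simp only [zero_add, S_one, ← Finset.sum_add_distrib]
      constructor
      · intro m h1 h2
        have hm : m = 1 := by omega
        subst hm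
        have : (1:ℕ) = 0 + 1 := rfl
        rw [this, hsum]
        simp only [zero_add] at hx1 hy1 ⊢
        linarith
      · simp only [S_zero, div_one, hsum]
        exact le_rfl
    · -- inductive step, J = K+1 ≥ 1
      obtain ⟨K, rfl⟩ : ∃ K, J = K + 1 := ⟨J - 1, by omega⟩
      set z := fun i => x i + y i with hz
      have hxJ : ∀ m, 1 ≤ m → m ≤ K+1 → 0 < S A m x := fun m h1 h2 => hx m h1 (by omega)
      have hyJ : ∀ m, 1 ≤ m → m ≤ K+1 → 0 < S A m y := fun m h1 h2 => hy m h1 (by omega)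
      obtain ⟨hposA, _⟩ := ih (by omega) A x y hxJ hyJ
      rw [← hz] at hposA
      have px : 0 < S A (K+1) x := hx (K+1) (by omega) (by omega)
      have py : 0 < S A (K+1) y := hy (K+1) (by omega) (by omega)
      have pz : 0 < S A (K+1) z := hposA (K+1) (by omega) le_rfl
      -- per-index Titu bound
      have hterm : ∀ i ∈ A,
          (z i)^2 * S (A.erase i) K z / S A (K+1) z
            ≤ x i^2 * S (A.erase i) K x / S A (K+1) x
              + y i^2 * S (A.erase i) K y / S A (K+1) y := by
        intro i hi
        have hxe : ∀ m, 1 ≤ m → m ≤ K+1 → 0 < S (A.erase i) m x := by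
          intro m h1 h2
          exact erase_pos (k := K+2) hx hi m (by omega)
        have hye : ∀ m, 1 ≤ m → m ≤ K+1 → 0 < S (A.erase i) m y := by
          intro m h1 h2
          exact erase_pos (k := K+2) hy hi m (by omega)
        obtain ⟨hposE, hratioE⟩ := ih (by omega) (A.erase i) x y hxe hye
        rw [← hz] at hposE hratioE
        simp only [Nat.add_sub_cancel] at hratioE
        have pEx : 0 < S (A.erase i) K x := by
          rcases Nat.eq_zero_or_pos K with rfl | hK
          · simp
          · exact hxe K hK (by omega)
        have pEy : 0 < S (A.erase i) K y := by
          rcases Nat.eq_zero_or_pos K with rfl | hK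
          · simp
          · exact hye K hK (by omega)
        have pEz : 0 < S (A.erase i) K z := by
          rcases Nat.eq_zero_or_pos K with rfl | hK
          · simp
          · exact hposE K hK (by omega)
        have hsplitx := S_erase hi K x
        have hsplity := S_erase hi K y
        have hsplitz := S_erase hi K z
        have hhx : S A (K+1) x / S (A.erase i) K x
            = x i + S (A.erase i) (K+1) x / S (A.erase i) K x := by
          rw [hsplitx, add_div, mul_div_assoc, div_self (ne_of_gt pEx)]
          ring
        have hhy : S A (K+1) y / S (A.erase i) K y
            = y i + S (A.erase i) (K+1) y / S (A.erase i) K y := by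
          rw [hsplity, add_div, mul_div_assoc, div_self (ne_of_gt pEy)]
          ring
        have hhz : S A (K+1) z / S (A.erase i) K z
            = z i + S (A.erase i) (K+1) z / S (A.erase i) K z := by
          rw [hsplitz, add_div, mul_div_assoc, div_self (ne_of_gt pEz)]
          ring
        have hzi : z i = x i + y i := rfl
        have hsup : S A (K+1) x / S (A.erase i) K x + S A (K+1) y / S (A.erase i) K y
            ≤ S A (K+1) z / S (A.erase i) K z := by
          rw [hhx, hhy, hhz, hzi]
          linarith
        have hux : 0 < S A (K+1) x / S (A.erase i) K x := div_pos px pEx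
        have huy : 0 < S A (K+1) y / S (A.erase i) K y := div_pos py pEy
        have hT := titu (a := x i) (b := y i) hux huy hsup
        have hrw : ∀ (a P E : ℝ), 0 < E → 0 < P → a^2 / (P / E) = a^2 * E / P := by
          intro a P E hE hP
          field_simp
        rw [hrw _ _ _ pEx px, hrw _ _ _ pEy py, hrw _ _ _ pEz pz, ← hzi] at hT
        exact hT
      -- the identity (K+2) S_{K+2} = S₁ S_{K+1} - ∑ wᵢ² S_K^{(i)}
      have hid : ∀ w : Fin n → ℝ, (((K+1 : ℕ) : ℝ) + 1) * S A (K+1+1) w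
          = S A 1 w * S A (K+1) w - ∑ i ∈ A, (w i)^2 * S (A.erase i) K w := by
        intro w
        have he := euler A (K+1) w
        have hsummand : ∀ i ∈ A, w i * S (A.erase i) (K+1) w
            = w i * S A (K+1) w - (w i)^2 * S (A.erase i) K w := by
          intro i hi
          rw [S_erase hi K w]
          ring
        have hs : ∑ i ∈ A, w i * S (A.erase i) (K+1) w
            = S A 1 w * S A (K+1) w - ∑ i ∈ A, (w i)^2 * S (A.erase i) K w := by
          rw [Finset.sum_congr rfl hsummand, Finset.sum_sub_distrib, ← Finset.sum_mul, ← S_one]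
        rw [← he, hs]
      have hdiv : ∀ w : Fin n → ℝ, 0 < S A (K+1) w →
          (((K+1 : ℕ) : ℝ) + 1) * (S A (K+1+1) w / S A (K+1) w)
            = S A 1 w - ∑ i ∈ A, (w i)^2 * S (A.erase i) K w / S A (K+1) w := by
        intro w hw
        rw [← Finset.sum_div, eq_sub_iff_add_eq, ← mul_div_assoc, ← add_div,
          div_eq_iff (ne_of_gt hw)]
        linarith [hid w]
      -- summation of the Titu bounds
      have hsumT := Finset.sum_le_sum hterm
      rw [Finset.sum_add_distrib] at hsumT
      have hsum1 : S A 1 z = S A 1 x + S A 1 y := by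
        rw [hz]
        simp only [S_one, ← Finset.sum_add_distrib]
      have hc : (0:ℝ) < ((K+1 : ℕ) : ℝ) + 1 := by positivity
      have hfin : (((K+1 : ℕ) : ℝ) + 1) * (S A (K+1+1) x / S A (K+1) x)
          + (((K+1 : ℕ) : ℝ) + 1) * (S A (K+1+1) y / S A (K+1) y)
          ≤ (((K+1 : ℕ) : ℝ) + 1) * (S A (K+1+1) z / S A (K+1) z) := by
        rw [hdiv x px, hdiv y py, hdiv z pz]
        linarith
      have hratio : S A (K+1+1) x / S A (K+1) x + S A (K+1+1) y / S A (K+1) y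
          ≤ S A (K+1+1) z / S A (K+1) z := by
        have hfin' : (((K+1 : ℕ) : ℝ) + 1) * (S A (K+1+1) x / S A (K+1) x
            + S A (K+1+1) y / S A (K+1) y)
            ≤ (((K+1 : ℕ) : ℝ) + 1) * (S A (K+1+1) z / S A (K+1) z) := by
          rw [mul_add]
          exact hfin
        exact le_of_mul_le_mul_left hfin' hc
      have pzK2 : 0 < S A (K+1+1) z := by
        have hxr : 0 < S A (K+1+1) x / S A (K+1) x :=
          div_pos (hx (K+1+1) (by omega) le_rfl) px
        have hyr : 0 < S A (K+1+1) y / S A (K+1) y :=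
          div_pos (hy (K+1+1) (by omega) le_rfl) py
        have hzr : 0 < S A (K+1+1) z / S A (K+1) z :=
          lt_of_lt_of_le (add_pos hxr hyr) hratio
        have := mul_pos hzr pz
        rwa [div_mul_cancel₀ _ (ne_of_gt pz)] at this
      refine ⟨?_, hratio⟩
      intro m h1 h2
      rcases eq_or_lt_of_le h2 with rfl | hlt
      · exact pzK2
      · exact hposA m h1 (by omega)

/-! ### Superadditivity of the k-th root (Mahler / Minkowski) -/

lemma mahler {ι : Type*} (s : Finset ι) (hs : s.Nonempty) (a b : ι → ℝ)
    (ha : ∀ i ∈ s, 0 < a i) (hb : ∀ i ∈ s, 0 < b i) :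
    (∏ i ∈ s, a i) ^ (1 / (s.card : ℝ)) + (∏ i ∈ s, b i) ^ (1 / (s.card : ℝ))
      ≤ (∏ i ∈ s, (a i + b i)) ^ (1 / (s.card : ℝ)) := by
  have hm : 0 < s.card := Finset.card_pos.2 hs
  have hmR : (0:ℝ) < (s.card : ℝ) := by exact_mod_cast hm
  set w : ι → ℝ := fun _ => 1 / (s.card : ℝ) with hw
  have hw1 : ∑ i ∈ s, w i = 1 := by
    rw [hw, Finset.sum_const, nsmul_eq_mul]
    field_simp
  have hab : ∀ i ∈ s, 0 < a i + b i := fun i hi => add_pos (ha i hi) (hb i hi)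
  have h1 := Real.geom_mean_le_arith_mean_weighted s w (fun i => a i / (a i + b i))
    (fun i _ => by positivity) hw1
    (fun i hi => div_nonneg (ha i hi).le (hab i hi).le)
  have h2 := Real.geom_mean_le_arith_mean_weighted s w (fun i => b i / (a i + b i))
    (fun i _ => by positivity) hw1
    (fun i hi => div_nonneg (hb i hi).le (hab i hi).le)
  have hsum : ∑ i ∈ s, w i * (a i / (a i + b i)) + ∑ i ∈ s, w i * (b i / (a i + b i)) = 1 := by
    rw [← Finset.sum_add_distrib, ← hw1]
    refine Finset.sum_congr rfl fun i hi => ?_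
    rw [← mul_add, ← add_div, div_self (ne_of_gt (hab i hi)), mul_one]
  have hprod : ∀ c : ι → ℝ, (∀ i ∈ s, 0 < c i) →
      ∏ i ∈ s, (c i / (a i + b i)) ^ w i
        = (∏ i ∈ s, c i) ^ (1 / (s.card : ℝ)) / (∏ i ∈ s, (a i + b i)) ^ (1 / (s.card : ℝ)) := by
    intro c hc
    rw [← Real.finset_prod_rpow s c (fun i hi => (hc i hi).le),
      ← Real.finset_prod_rpow s _ (fun i hi => (hab i hi).le),
      ← Finset.prod_div_distrib]
    exact Finset.prod_congr rfl fun i hi => by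
      rw [Real.div_rpow (hc i hi).le (hab i hi).le]
  rw [hprod a ha] at h1
  rw [hprod b hb] at h2
  have hP : 0 < (∏ i ∈ s, (a i + b i)) ^ (1 / (s.card : ℝ)) :=
    Real.rpow_pos_of_pos (Finset.prod_pos hab) _
  have hcomb : (∏ i ∈ s, a i) ^ (1 / (s.card : ℝ)) / (∏ i ∈ s, (a i + b i)) ^ (1 / (s.card : ℝ))
      + (∏ i ∈ s, b i) ^ (1 / (s.card : ℝ)) / (∏ i ∈ s, (a i + b i)) ^ (1 / (s.card : ℝ))
      ≤ 1 := by linarith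
  rw [← add_div, div_le_one hP] at hcomb
  exact hcomb

lemma S_telescope (A : Finset (Fin n)) (x : Fin n → ℝ) :
    ∀ k : ℕ, (∀ m, 1 ≤ m → m ≤ k → 0 < S A m x) →
    ∏ j ∈ Finset.Icc 1 k, (S A j x / S A (j-1) x) = S A k x := by
  intro k
  induction k with
  | zero => intro _; simp
  | succ K ih =>
    intro h
    rw [Finset.prod_Icc_succ_top (by omega), ih (fun m h1 h2 => h m h1 (by omega)),
      Nat.add_sub_cancel]
    rcases Nat.eq_zero_or_pos K with rfl | hK
    · simp
    · rw [mul_comm, div_mul_cancel₀ _ (ne_of_gt (h K hK (by omega)))]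

lemma F_superadd (A : Finset (Fin n)) {k : ℕ} (hk : 1 ≤ k) {x y : Fin n → ℝ}
    (hx : ∀ m, 1 ≤ m → m ≤ k → 0 < S A m x) (hy : ∀ m, 1 ≤ m → m ≤ k → 0 < S A m y) :
    S A k x ^ (1/(k:ℝ)) + S A k y ^ (1/(k:ℝ))
      ≤ S A k (fun i => x i + y i) ^ (1/(k:ℝ)) := by
  have hposz : ∀ m, 1 ≤ m → m ≤ k → 0 < S A m (fun i => x i + y i) :=
    (super k hk A x y hx hy).1
  have hratio : ∀ j, 1 ≤ j → j ≤ k →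
      S A j x / S A (j-1) x + S A j y / S A (j-1) y
        ≤ S A j (fun i => x i + y i) / S A (j-1) (fun i => x i + y i) := by
    intro j h1 h2
    exact (super j h1 A x y (fun m hm1 hm2 => hx m hm1 (le_trans hm2 h2))
      (fun m hm1 hm2 => hy m hm1 (le_trans hm2 h2))).2
  have hpos0 : ∀ (w : Fin n → ℝ), (∀ m, 1 ≤ m → m ≤ k → 0 < S A m w) →
      ∀ j ∈ Finset.Icc 1 k, 0 < S A j w / S A (j-1) w := by
    intro w hw j hj
    rw [Finset.mem_Icc] at hj
    refine div_pos (hw j hj.1 hj.2) ?_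
    rcases Nat.eq_zero_or_pos (j-1) with h0 | hp
    · rw [h0]; simp
    · exact hw (j-1) hp (by omega)
  have hcard : (Finset.Icc 1 k).card = k := by rw [Nat.card_Icc]; omega
  have hne : (Finset.Icc 1 k).Nonempty := ⟨1, by rw [Finset.mem_Icc]; omega⟩
  have hax := hpos0 x hx
  have hay := hpos0 y hy
  have haz := hpos0 _ hposz
  have htx := S_telescope A x k hx
  have hty := S_telescope A y k hy
  have htz := S_telescope A _ k hposz
  rw [← htx, ← hty, ← htz]
  have hM := mahler (Finset.Icc 1 k) hne (fun j => S A j x / S A (j-1) x)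
    (fun j => S A j y / S A (j-1) y) hax hay
  rw [hcard] at hM
  refine le_trans hM ?_
  refine Real.rpow_le_rpow ?_ ?_ (by positivity)
  · exact Finset.prod_nonneg fun j hj => (add_pos (hax j hj) (hay j hj)).le
  · refine Finset.prod_le_prod (fun j hj => (add_pos (hax j hj) (hay j hj)).le) ?_
    intro j hj
    rw [Finset.mem_Icc] at hj
    exact hratio j hj.1 hj.2

/-! ### Multilinear expansion -/

lemma S_add_expand (A : Finset (Fin n)) (k : ℕ) (y zz : Fin n → ℝ) :
    S A k (fun i => y i + zz i)
      = ∑ r ∈ Finset.range (k+1), ∑ s ∈ A.powersetCard k, ∑ t ∈ Finset.powersetCard r s,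
          (∏ l ∈ t, zz l) * ∏ l ∈ s \ t, y l := by
  classical
  unfold S
  have hper : ∀ s ∈ A.powersetCard k, ∏ i ∈ s, (y i + zz i)
      = ∑ r ∈ Finset.range (k+1), ∑ t ∈ Finset.powersetCard r s,
          (∏ l ∈ t, zz l) * ∏ l ∈ s \ t, y l := by
    intro s hs
    rw [Finset.mem_powersetCard] at hs
    have h1 : (∏ i ∈ s, (y i + zz i)) = ∏ i ∈ s, (zz i + y i) :=
      Finset.prod_congr rfl fun i _ => add_comm _ _
    rw [h1, Finset.prod_add, Finset.sum_powerset, hs.2]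
  rw [Finset.sum_congr rfl hper, Finset.sum_comm]

lemma S_add_smul_expand (A : Finset (Fin n)) (k : ℕ) (y μ : Fin n → ℝ) (ε : ℝ) :
    S A k (fun i => y i + ε * μ i)
      = ∑ r ∈ Finset.range (k+1), ε^r * (∑ s ∈ A.powersetCard k,
          ∑ t ∈ Finset.powersetCard r s, (∏ l ∈ t, μ l) * ∏ l ∈ s \ t, y l) := by
  rw [S_add_expand A k y (fun i => ε * μ i)]
  refine Finset.sum_congr rfl fun r hr => ?_
  rw [Finset.mul_sum]
  refine Finset.sum_congr rfl fun s hs => ?_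
  rw [Finset.mul_sum]
  refine Finset.sum_congr rfl fun t ht => ?_
  rw [Finset.mem_powersetCard] at ht
  rw [Finset.prod_mul_distrib, Finset.prod_const, ht.2]
  ring

lemma M0_eq (A : Finset (Fin n)) (k : ℕ) (μ y : Fin n → ℝ) :
    ∑ s ∈ A.powersetCard k, ∑ t ∈ Finset.powersetCard 0 s,
        (∏ l ∈ t, μ l) * ∏ l ∈ s \ t, y l = S A k y := by
  unfold S
  refine Finset.sum_congr rfl fun s hs => ?_
  rw [Finset.powersetCard_zero, Finset.sum_singleton, Finset.prod_empty, Finset.sdiff_empty,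
    one_mul]

lemma M1_eq (A : Finset (Fin n)) (K : ℕ) (μ y : Fin n → ℝ) :
    ∑ s ∈ A.powersetCard (K+1), ∑ t ∈ Finset.powersetCard 1 s,
        (∏ l ∈ t, μ l) * ∏ l ∈ s \ t, y l
      = ∑ i ∈ A, μ i * S (A.erase i) K y := by
  classical
  rw [← sum_pair A K μ y]
  refine Finset.sum_congr rfl fun s hs => ?_
  rw [Finset.powersetCard_one, Finset.sum_map]
  refine Finset.sum_congr rfl fun i hi => ?_
  have he : s \ {i} = s.erase i := (Finset.erase_eq s i).symm
  simp only [Function.Embedding.coeFn_mk, Finset.prod_singleton, he]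

/-! ### Limit and binomial bound -/

lemma pow_lower (a d : ℝ) (ha : 0 ≤ a) (hd : 0 ≤ d) :
    ∀ K : ℕ, a^(K+1) + ((K:ℝ)+1) * d * a^K ≤ (a+d)^(K+1) := by
  intro K
  induction K with
  | zero => simp
  | succ K ih =>
    have h1 : (a+d)^(K+1+1) = (a+d) * (a+d)^(K+1) := by ring
    rw [h1]
    have h2 : (a+d) * (a^(K+1) + ((K:ℝ)+1) * d * a^K) ≤ (a+d) * (a+d)^(K+1) :=
      mul_le_mul_of_nonneg_left ih (by linarith)
    refine le_trans ?_ h2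
    have h3 : 0 ≤ ((K:ℝ)+1) * d^2 * a^K := by positivity
    have key : (a+d) * (a^(K+1) + ((K:ℝ)+1) * d * a^K)
        = a^(K+1+1) + (((K:ℝ)+1)+1) * d * a^(K+1) + ((K:ℝ)+1) * d^2 * a^K := by
      ring
    rw [key]
    push_cast
    linarith

lemma limit_ge {c : ℝ} {k : ℕ} (hk : 1 ≤ k) (M : ℕ → ℝ)
    (h : ∀ ε : ℝ, 0 < ε → c ≤ ∑ r ∈ Finset.Icc 1 k, ε^(r-1) * M r) :
    c ≤ M 1 := by
  set φ : ℝ → ℝ := fun ε => ∑ r ∈ Finset.Icc 1 k, ε^(r-1) * M r with hφ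
  have hcont : Continuous φ := by
    apply continuous_finset_sum
    intro r _
    exact (continuous_pow _).mul continuous_const
  have hφ0 : φ 0 = M 1 := by
    rw [hφ]
    simp only
    rw [Finset.sum_eq_single 1]
    · norm_num
    · intro r hr hne
      rw [Finset.mem_Icc] at hr
      rw [zero_pow (by omega : r - 1 ≠ 0), zero_mul]
    · intro hne
      exact absurd (Finset.mem_Icc.2 ⟨le_rfl, hk⟩) hne
  haveI : (nhdsWithin (0:ℝ) (Set.Ioi 0)).NeBot := nhdsGT_neBot 0
  have htend : Filter.Tendsto φ (nhdsWithin 0 (Set.Ioi 0)) (nhds (M 1)) := by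
    rw [← hφ0]
    exact (hcont.tendsto 0).mono_left nhdsWithin_le_nhds
  refine ge_of_tendsto htend ?_
  filter_upwards [self_mem_nhdsWithin] with ε hε
  exact h ε hε

/-! ### Main inequality -/

theorem main_ineq {k : ℕ} (hk1 : 1 ≤ k) {μ γ : Fin n → ℝ}
    (hμ : ∀ j, 1 ≤ j → j ≤ k → 0 < S (Finset.univ : Finset (Fin n)) j μ)
    (hγ : ∀ j, 1 ≤ j → j ≤ k → 0 < S (Finset.univ : Finset (Fin n)) j γ) :
    (k : ℝ) * S Finset.univ k μ ^ (1 / (k : ℝ)) * S Finset.univ k γ ^ (((k : ℝ) - 1) / (k : ℝ))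
      ≤ ∑ i ∈ Finset.univ, μ i * S (Finset.univ.erase i) (k-1) γ := by
  classical
  obtain ⟨K, rfl⟩ : ∃ K, k = K + 1 := ⟨k-1, by omega⟩
  simp only [Nat.add_sub_cancel]
  set A := (Finset.univ : Finset (Fin n)) with hA
  have hMk : 0 < S A (K+1) μ := hμ (K+1) (by omega) le_rfl
  have hGk : 0 < S A (K+1) γ := hγ (K+1) (by omega) le_rfl
  -- rewrite the second exponent
  have hsub : ((K+1 : ℕ) : ℝ) - 1 = (K : ℝ) := by push_cast; ring
  have hexpeq : ((K : ℝ)) / ((K+1 : ℕ) : ℝ) = (1 / ((K+1 : ℕ) : ℝ)) * (K : ℝ) := by ring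
  rw [hsub, hexpeq, Real.rpow_mul hGk.le, Real.rpow_natCast]
  -- the mixed coefficients
  set M : ℕ → ℝ := fun r => ∑ s ∈ A.powersetCard (K+1), ∑ t ∈ Finset.powersetCard r s,
      (∏ l ∈ t, μ l) * ∏ l ∈ s \ t, γ l with hM
  have hM1 : M 1 = ∑ i ∈ A, μ i * S (A.erase i) K γ := by
    rw [hM]
    exact M1_eq A K μ γ
  rw [← hM1]
  -- key inequality for every ε > 0
  have hkey : ∀ ε : ℝ, 0 < ε →
      ((K+1 : ℕ) : ℝ) * S A (K+1) μ ^ (1 / ((K+1 : ℕ) : ℝ))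
          * (S A (K+1) γ ^ (1 / ((K+1 : ℕ) : ℝ)))^K
        ≤ ∑ r ∈ Finset.Icc 1 (K+1), ε^(r-1) * M r := by
    intro ε hε
    set e : ℝ := 1 / ((K+1 : ℕ) : ℝ) with he
    set b : ℝ := S A (K+1) μ ^ e with hb
    set a : ℝ := S A (K+1) γ ^ e with ha
    have hapos : 0 < a := Real.rpow_pos_of_pos hGk e
    have hbpos : 0 < b := Real.rpow_pos_of_pos hMk e
    have hεμ : ∀ m, 1 ≤ m → m ≤ K+1 → 0 < S A m (fun i => ε * μ i) := by
      intro m h1 h2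
      rw [S_smul]
      exact mul_pos (pow_pos hε m) (hμ m h1 h2)
    have hsup := F_superadd A (by omega : 1 ≤ K+1) hγ hεμ
    rw [← he, ← ha] at hsup
    have hscal : S A (K+1) (fun i => ε * μ i) ^ e = ε * b := by
      rw [S_smul, Real.mul_rpow (pow_nonneg hε.le _) hMk.le, ← hb, he, one_div,
        Real.pow_rpow_inv_natCast hε.le (by omega)]
    rw [hscal] at hsup
    have hz : ∀ m, 1 ≤ m → m ≤ K+1 → 0 < S A m (fun i => γ i + ε * μ i) :=
      (super (K+1) (by omega) A γ (fun i => ε * μ i) hγ hεμ).1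
    have hposz := hz (K+1) (by omega) le_rfl
    have hpow : (a + ε * b)^(K+1) ≤ S A (K+1) (fun i => γ i + ε * μ i) := by
      have h1 : ((S A (K+1) (fun i => γ i + ε * μ i)) ^ e)^(K+1)
          = S A (K+1) (fun i => γ i + ε * μ i) := by
        rw [he, one_div, Real.rpow_inv_natCast_pow hposz.le (by omega)]
      calc (a + ε * b)^(K+1)
          ≤ ((S A (K+1) (fun i => γ i + ε * μ i)) ^ e)^(K+1) := by
            refine pow_le_pow_left₀ (by positivity) hsup _
        _ = _ := h1
    have hlow := pow_lower a (ε * b) hapos.le (by positivity) K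
    have hGpow : a^(K+1) = S A (K+1) γ := by
      rw [ha, he, one_div, Real.rpow_inv_natCast_pow hGk.le (by omega)]
    have hexp : S A (K+1) (fun i => γ i + ε * μ i)
        = ∑ r ∈ Finset.range (K+1+1), ε^r * M r := by
      simp only [hM]
      exact S_add_smul_expand A (K+1) γ μ ε
    have hM0 : M 0 = S A (K+1) γ := by
      rw [hM]
      exact M0_eq A (K+1) μ γ
    have hsplit : ∑ r ∈ Finset.range (K+1+1), ε^r * M r
        = M 0 + ∑ r ∈ Finset.Icc 1 (K+1), ε^r * M r := by
      have hins : Finset.range (K+1+1) = insert 0 (Finset.Icc 1 (K+1)) := by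
        ext r
        simp only [Finset.mem_range, Finset.mem_insert, Finset.mem_Icc]
        omega
      have h0 : (0:ℕ) ∉ Finset.Icc 1 (K+1) := by
        rw [Finset.mem_Icc]
        omega
      rw [hins, Finset.sum_insert h0, pow_zero, one_mul]
    have hIcc : ∑ r ∈ Finset.Icc 1 (K+1), ε^r * M r
        = ε * ∑ r ∈ Finset.Icc 1 (K+1), ε^(r-1) * M r := by
      rw [Finset.mul_sum]
      refine Finset.sum_congr rfl fun r hr => ?_
      rw [Finset.mem_Icc] at hr
      have hpows : ε^r = ε * ε^(r-1) := by
        conv_lhs => rw [show r = 1 + (r-1) by omega]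
        rw [pow_add, pow_one]
      rw [hpows]
      ring
    -- combine everything
    have hcomb : ((K:ℝ)+1) * (ε * b) * a^K
        ≤ ε * ∑ r ∈ Finset.Icc 1 (K+1), ε^(r-1) * M r := by
      have h1 : a^(K+1) + ((K:ℝ)+1) * (ε * b) * a^K
          ≤ S A (K+1) γ + ε * ∑ r ∈ Finset.Icc 1 (K+1), ε^(r-1) * M r := by
        calc a^(K+1) + ((K:ℝ)+1) * (ε * b) * a^K
            ≤ (a + ε * b)^(K+1) := hlow
          _ ≤ S A (K+1) (fun i => γ i + ε * μ i) := hpow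
          _ = S A (K+1) γ + ε * ∑ r ∈ Finset.Icc 1 (K+1), ε^(r-1) * M r := by
              rw [hexp, hsplit, hM0, hIcc]
      rw [hGpow] at h1
      linarith
    have hre : ((K:ℝ)+1) * (ε * b) * a^K = ε * (((K+1:ℕ):ℝ) * b * a^K) := by
      push_cast
      ring
    rw [hre] at hcomb
    exact le_of_mul_le_mul_left hcomb hε
  exact limit_ge (by omega) M hkey

/-! ### Equality case -/

theorem main_eq {k : ℕ} (hk1 : 1 ≤ k) {μ : Fin n → ℝ}
    (hMk : 0 < S (Finset.univ : Finset (Fin n)) k μ) :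
    (k : ℝ) * S Finset.univ k μ ^ (1 / (k : ℝ))
        * S Finset.univ k
            (fun i => S Finset.univ k μ ^ (-(1 / (k : ℝ))) * μ i) ^ (((k : ℝ) - 1) / (k : ℝ))
      = ∑ i ∈ Finset.univ, μ i * S (Finset.univ.erase i) (k-1)
          (fun i => S Finset.univ k μ ^ (-(1 / (k : ℝ))) * μ i) := by
  classical
  obtain ⟨K, rfl⟩ : ∃ K, k = K + 1 := ⟨k-1, by omega⟩
  simp only [Nat.add_sub_cancel]
  set A := (Finset.univ : Finset (Fin n)) with hA
  set Mk := S A (K+1) μ with hMkdef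
  set c : ℝ := Mk ^ (-(1 / ((K+1:ℕ) : ℝ))) with hc
  have hcpos : 0 < c := Real.rpow_pos_of_pos hMk _
  have hkne : ((K+1:ℕ) : ℝ) ≠ 0 := by
    push_cast
    positivity
  have hcK1 : c^(K+1) = Mk⁻¹ := by
    rw [hc, ← Real.rpow_natCast (Mk ^ (-(1 / ((K+1:ℕ) : ℝ)))) (K+1), ← Real.rpow_mul hMk.le]
    have hexp : -(1 / ((K+1:ℕ) : ℝ)) * ((K+1:ℕ) : ℝ) = -1 := by
      field_simp
    rw [hexp]
    rw [Real.rpow_neg_one]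
  have hGk1 : S A (K+1) (fun i => c * μ i) = 1 := by
    rw [S_smul, hcK1, ← hMkdef, inv_mul_cancel₀ (ne_of_gt hMk)]
  rw [hGk1, Real.one_rpow, mul_one]
  -- right-hand side
  have hrhs : ∀ i ∈ A, μ i * S (A.erase i) K (fun i => c * μ i)
      = c^K * (μ i * S (A.erase i) K μ) := by
    intro i _
    rw [S_smul]
    ring
  rw [Finset.sum_congr rfl hrhs, ← Finset.mul_sum, euler A K μ]
  -- now show (K+1) * Mk^(1/(K+1)) = c^K * ((K+1) * Mk)
  have hcK : c^K = Mk ^ (-(1 / ((K+1:ℕ) : ℝ)) * (K:ℝ)) := by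
    rw [hc, ← Real.rpow_natCast (Mk ^ (-(1 / ((K+1:ℕ) : ℝ)))) K, ← Real.rpow_mul hMk.le]
  have hfin : Mk ^ (1 / ((K+1:ℕ) : ℝ)) = c^K * Mk := by
    rw [hcK]
    calc Mk ^ (1 / ((K+1:ℕ) : ℝ))
        = Mk ^ (-(1 / ((K+1:ℕ) : ℝ)) * (K:ℝ) + 1) := by
          congr 1
          field_simp
          push_cast; ring
      _ = Mk ^ (-(1 / ((K+1:ℕ) : ℝ)) * (K:ℝ)) * Mk ^ (1:ℝ) := Real.rpow_add hMk _ _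
      _ = Mk ^ (-(1 / ((K+1:ℕ) : ℝ)) * (K:ℝ)) * Mk := by rw [Real.rpow_one]
  rw [hfin]
  push_cast
  ring

end Garding

theorem stmt_14 (n k : ℕ) (hk2 : 2 ≤ k) (hkn : k ≤ n) (μ γ : Fin n → ℝ)
    (hμ : ∀ j, 1 ≤ j → j ≤ k → 0 < esymm n j μ)
    (hγ : ∀ j, 1 ≤ j → j ≤ k → 0 < esymm n j γ) :
    (k : ℝ) * esymm n k μ ^ (1 / (k : ℝ)) * esymm n k γ ^ (((k : ℝ) - 1) / (k : ℝ))
      ≤ ∑ i, μ i * esymm n (k - 1) (Function.update γ i 0) ∧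
    (γ = (fun i => esymm n k μ ^ (-(1 / (k : ℝ))) * μ i) →
      (k : ℝ) * esymm n k μ ^ (1 / (k : ℝ)) * esymm n k γ ^ (((k : ℝ) - 1) / (k : ℝ))
        = ∑ i, μ i * esymm n (k - 1) (Function.update γ i 0)) := by
  constructor
  · have h := Garding.main_ineq (by omega : 1 ≤ k) hμ hγ
    simp only [Garding.esymm_eq, Garding.S_update_zero]
    exact h
  · intro hγeq
    subst hγeq
    have h := Garding.main_eq (by omega : 1 ≤ k) (hμ k (by omega) le_rfl)
    simp only [Garding.esymm_eq, Garding.S_update_zero]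
    exact h
end

section
/- Marcus's inequality: for symmetric n×n matrices X and M with X positive semi-definite, trace(XM) ≥ min over permutations p of {1,…,n} of Σ_{i=1}^n λᵢ(M)·λ_{p(i)}(X), where λᵢ denotes eigenvalues counted with multiplicity. -/
open Matrix

theorem stmt_16 (n : ℕ) (X M : Matrix (Fin n) (Fin n) ℝ)
    (hX : X.PosSemidef) (hM : M.IsHermitian) :
    (⨅ p : Equiv.Perm (Fin n), ∑ i, hM.eigenvalues i * hX.1.eigenvalues (p i))
      ≤ (X * M).trace := by
  set a := hX.1.eigenvalues with ha
  set b := hM.eigenvalues with hb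
  set V : Matrix (Fin n) (Fin n) ℝ := (hX.1.eigenvectorUnitary : Matrix (Fin n) (Fin n) ℝ)
  set U : Matrix (Fin n) (Fin n) ℝ := (hM.eigenvectorUnitary : Matrix (Fin n) (Fin n) ℝ)
  set Wu : Matrix.unitaryGroup (Fin n) ℝ := star hX.1.eigenvectorUnitary * hM.eigenvectorUnitary
    with hWu
  set W : Matrix (Fin n) (Fin n) ℝ := (Wu : Matrix (Fin n) (Fin n) ℝ) with hW
  have hWV : W = star V * U := rfl
  have hW1 : W * star W = 1 := Matrix.mem_unitaryGroup_iff.mp Wu.2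
  have hW2 : star W * W = 1 := Matrix.mem_unitaryGroup_iff'.mp Wu.2
  set S : Matrix (Fin n) (Fin n) ℝ := fun k l => (W k l) ^ 2 with hS
  -- S is doubly stochastic
  have hSds : S ∈ doublyStochastic ℝ (Fin n) := by
    rw [mem_doublyStochastic_iff_sum]
    refine ⟨fun i j => sq_nonneg _, fun i => ?_, fun j => ?_⟩
    · have := congrArg (fun A => A i i) hW1
      simpa [hS, Matrix.mul_apply, Matrix.one_apply, sq] using this
    · have := congrArg (fun A => A j j) hW2
      simpa [hS, Matrix.mul_apply, Matrix.one_apply, sq, mul_comm] using this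
  -- spectral decompositions
  have hXd : X = V * diagonal a * star V := by
    simpa using hX.1.spectral_theorem
  have hMd : M = U * diagonal b * star U := by
    simpa using hM.spectral_theorem
  -- trace computation
  have key : (X * M).trace = ∑ k, ∑ l, b l * a k * S k l := by
    have h1 : X * M = V * (diagonal a * (star V * (U * (diagonal b * star U)))) := by
      rw [hXd, hMd]; simp only [Matrix.mul_assoc]
    have h2 : (X * M).trace
        = (diagonal a * (W * (diagonal b * star W))).trace := by
      rw [h1, Matrix.trace_mul_comm]
      congr 1
      rw [hWV, Matrix.star_mul, star_star]
      simp only [Matrix.mul_assoc]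
    have h3 : ∀ k, (diagonal a * (W * (diagonal b * star W))) k k
        = ∑ l, b l * a k * S k l := by
      intro k
      rw [Matrix.diagonal_mul, Matrix.mul_apply, Finset.mul_sum]
      refine Finset.sum_congr rfl fun l _ => ?_
      rw [Matrix.diagonal_mul, Matrix.star_apply]
      simp only [hS, star_trivial, sq]
      ring
    rw [h2]
    simp only [Matrix.trace, Matrix.diag]
    exact Finset.sum_congr rfl fun k _ => h3 k
  rw [key]
  -- the linear functional
  set f : Matrix (Fin n) (Fin n) ℝ → ℝ := fun A => ∑ k, ∑ l, b l * a k * A k l with hf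
  have hflin : IsLinearMap ℝ f := by
    constructor
    · intro A B
      simp [hf, mul_add, Finset.sum_add_distrib]
    · intro c A
      simp only [hf, smul_eq_mul, Finset.mul_sum, Matrix.smul_apply]
      refine Finset.sum_congr rfl fun k _ => Finset.sum_congr rfl fun l _ => by ring
  set c : ℝ := ⨅ p : Equiv.Perm (Fin n), ∑ i, b i * a (p i) with hc
  have hperm : ∀ σ : Equiv.Perm (Fin n), c ≤ f (σ.permMatrix ℝ) := by
    intro σ
    have h1 : f (σ.permMatrix ℝ) = ∑ k, b (σ k) * a k := by
      simp [hf, Equiv.Perm.permMatrix, PEquiv.toMatrix_apply, Equiv.toPEquiv_apply,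
        mul_ite, Finset.sum_ite_eq, eq_comm]
    have h2 : (∑ i, b i * a (σ⁻¹ i)) = ∑ k, b (σ k) * a k := by
      rw [← Equiv.sum_comp σ (fun i => b i * a (σ⁻¹ i))]
      simp
    rw [h1, ← h2]
    exact ciInf_le (Finite.bddBelow_range _) σ⁻¹
  have hhalf : Convex ℝ {A : Matrix (Fin n) (Fin n) ℝ | c ≤ f A} :=
    convex_halfSpace_ge hflin c
  have hmem : S ∈ convexHull ℝ {σ.permMatrix ℝ | σ : Equiv.Perm (Fin n)} := by
    rw [← doublyStochastic_eq_convexHull_permMatrix]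
    exact hSds
  have := convexHull_min (s := {σ.permMatrix ℝ | σ : Equiv.Perm (Fin n)})
    (fun A hA => by obtain ⟨σ, rfl⟩ := hA; exact hperm σ) hhalf hmem
  exact this
end
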